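/- Suppose dim V = 2m is even and let α be a nonzero vector of V. Let 𝒲[m−1] be the collection of all nontrivial subspaces of V of dimension at most m−1, and let 𝒲^α[m] be the collection of all m-dimensional subspaces of V containing α. Then 𝒲[m−1] ∪ 𝒲^α[m] is a maximal independent set in G(V): any two members W₁, W₂ of this collection satisfy W₁ + W₂ ≠ V, and every nontrivial proper subspace W of V not in the collection satisfies W + W' = V for some W' in the collection. -/

import Mathlib

open Module

/-- If `dim V = 2m` is even and `α ≠ 0`, then the union of the collection of all
nontrivial subspaces of dimension at most `m-1` and the collection of all `m`-dimensional
subspaces containing `α` is a maximal independent set in `G(V)`: no two members sum to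
`V`, and every nontrivial proper subspace outside the collection sums to `V` with some
member. -/
theorem maximal_independent_set_even (K V : Type*) [Field K] [AddCommGroup V]
    [Module K V] [FiniteDimensional K V] (m : ℕ) (hm : 1 ≤ m)
    (hdim : finrank K V = 2 * m) (α : V) (hα : α ≠ 0)
    (S : Set (Submodule K V))
    (hS : S = {W : Submodule K V | (W ≠ ⊥ ∧ finrank K W ≤ m - 1) ∨
      (finrank K W = m ∧ α ∈ W)}) :
    (∀ W₁ ∈ S, ∀ W₂ ∈ S, W₁ ⊔ W₂ ≠ ⊤) ∧
    (∀ W : Submodule K V, W ≠ ⊥ → W ≠ ⊤ → W ∉ S →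
      ∃ W' ∈ S, W ⊔ W' = ⊤) := by
  subst hS
  constructor
  · rintro W₁ h₁ W₂ h₂ htop
    have hsum := Submodule.finrank_sup_add_finrank_inf_eq W₁ W₂
    rw [htop, finrank_top, hdim] at hsum
    rcases h₁ with ⟨hb1, hle1⟩ | ⟨he1, hm1⟩ <;>
      rcases h₂ with ⟨hb2, hle2⟩ | ⟨he2, hm2⟩
    · omega
    · omega
    · omega
    · have hmem : α ∈ W₁ ⊓ W₂ := ⟨hm1, hm2⟩
      have hne : finrank K ↥(W₁ ⊓ W₂) ≠ 0 := by
        intro h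
        rw [Submodule.finrank_eq_zero.mp h] at hmem
        exact hα hmem
      omega
  · intro W hbot htop hWS
    simp only [Set.mem_setOf_eq, not_or, not_and] at hWS
    obtain ⟨hW1, hW2⟩ := hWS
    have hge : m ≤ finrank K W := by
      have := hW1 hbot
      omega
    have hlt : finrank K ↥W < 2 * m := by
      rw [← hdim]; exact Submodule.finrank_lt htop
    rcases eq_or_lt_of_le hge with heq | hgt
    · -- dim W = m, α ∉ W
      have hαW : α ∉ W := hW2 heq.symm
      have hinf : W ⊓ Submodule.span K {α} = ⊥ := by
        rw [eq_bot_iff]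
        rintro x ⟨hxW, hxs⟩
        obtain ⟨c, rfl⟩ := Submodule.mem_span_singleton.mp hxs
        rcases eq_or_ne c 0 with rfl | hc
        · simp
        · exfalso
          have : α = c⁻¹ • (c • α) := by simp [smul_smul, inv_mul_cancel₀ hc]
          exact hαW (this ▸ W.smul_mem c⁻¹ hxW)
      have hαs : α ∈ Submodule.span K {α} := Submodule.mem_span_singleton_self α
      obtain ⟨C, hC⟩ := Submodule.exists_isCompl (W ⊔ Submodule.span K {α})
      have hd := Submodule.finrank_add_eq_of_isCompl hC
      have hsup1 := Submodule.finrank_sup_add_finrank_inf_eq W (Submodule.span K {α})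
      rw [hinf, finrank_bot, finrank_span_singleton hα, heq.symm] at hsup1
      rw [hdim] at hd
      set W' := Submodule.span K {α} ⊔ C with hW'
      have htop' : W ⊔ W' = ⊤ := by
        rw [hW', ← sup_assoc]
        rw [hC.codisjoint.eq_top]
      have hle : finrank K ↥W' ≤ m := by
        have := Submodule.finrank_sup_add_finrank_inf_eq (Submodule.span K {α}) C
        rw [finrank_span_singleton hα, ← hW'] at this
        omega
      have hgeW' : m ≤ finrank K ↥W' := by
        have h2 := Submodule.finrank_sup_add_finrank_inf_eq W W'
        rw [htop', finrank_top, hdim] at h2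
        omega
      exact ⟨W', Or.inr ⟨le_antisymm hle hgeW', Submodule.mem_sup_left hαs⟩, htop'⟩
    · obtain ⟨C, hC⟩ := Submodule.exists_isCompl W
      have hd := Submodule.finrank_add_eq_of_isCompl hC
      rw [hdim] at hd
      refine ⟨C, Or.inl ⟨?_, by omega⟩, hC.codisjoint.eq_top⟩
      intro h
      rw [h] at hd
      simp [finrank_bot] at hd
      omega
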